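/- Let F be a field of characteristic zero, V a finite-dimensional F-vector space, and N ∈ End_F(V) with N ∘ N = 0 and s := rank N ≥ 1. Let k be an integer with 1 ≤ k ≤ dim_F V − s, and let D be the endomorphism of the k-th exterior power ⋀^k V determined by D(v_1 ∧ ⋯ ∧ v_k) = Σ_{j=1}^{k} v_1 ∧ ⋯ ∧ N v_j ∧ ⋯ ∧ v_k. Then D is nilpotent with nilpotency index ν(D) = min(k, s). -/

import Mathlib

open Module Function

lemma aux_sum {M : Type*} [AddCommMonoid M] {k : ℕ} (m : ℕ) (f : Finset (Fin k) → M) :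
    ∑ S ∈ Finset.powersetCard m (Finset.univ : Finset (Fin k)), ∑ j ∈ Sᶜ, f (insert j S)
      = (m+1) • ∑ T ∈ Finset.powersetCard (m+1) (Finset.univ : Finset (Fin k)), f T := by
  have h : (m+1) • ∑ T ∈ Finset.powersetCard (m+1) (Finset.univ : Finset (Fin k)), f T
      = ∑ T ∈ Finset.powersetCard (m+1) (Finset.univ : Finset (Fin k)), ∑ _j ∈ T, f T := by
    rw [Finset.smul_sum]
    refine Finset.sum_congr rfl fun T hT => ?_
    rw [Finset.sum_const, (Finset.mem_powersetCard.mp hT).2]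
  rw [h, Finset.sum_sigma', Finset.sum_sigma']
  refine Finset.sum_nbij' (fun p => ⟨insert p.2 p.1, p.2⟩) (fun q => ⟨q.1.erase q.2, q.2⟩)
    ?_ ?_ ?_ ?_ ?_
  · rintro ⟨S, j⟩ hp
    simp only [Finset.mem_sigma, Finset.mem_powersetCard, Finset.mem_compl] at hp ⊢
    exact ⟨⟨Finset.subset_univ _, by rw [Finset.card_insert_of_notMem hp.2, hp.1.2]⟩,
      Finset.mem_insert_self _ _⟩
  · rintro ⟨T, j⟩ hq
    simp only [Finset.mem_sigma, Finset.mem_powersetCard, Finset.mem_compl] at hq ⊢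
    exact ⟨⟨Finset.subset_univ _, by rw [Finset.card_erase_of_mem hq.2, hq.1.2]; rfl⟩,
      Finset.notMem_erase _ _⟩
  · rintro ⟨S, j⟩ hp
    simp only [Finset.mem_sigma, Finset.mem_compl] at hp
    simp [Finset.erase_insert hp.2]
  · rintro ⟨T, j⟩ hq
    simp only [Finset.mem_sigma] at hq
    simp [Finset.insert_erase hq.2]
  · rintro ⟨S, j⟩ _
    rfl

lemma iMulti_ne_zero {F V : Type*} [Field F] [AddCommGroup V] [Module F V]
    {k : ℕ} {w : Fin k → V} (hw : LinearIndependent F w) :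
    ExteriorAlgebra.ιMulti F k w ≠ 0 := by
  classical
  set S := Submodule.span F (Set.range w) with hS
  obtain ⟨π, hπ⟩ := S.subtype.exists_leftInverse_of_injective S.ker_subtype
  let b : Basis (Fin k) F S := Basis.span hw
  let g : V →ₗ[F] (Fin k → F) := (b.equivFun : S →ₗ[F] (Fin k → F)) ∘ₗ π
  let φ : V [⋀^Fin k]→ₗ[F] F := (Matrix.detRowAlternating).compLinearMap g
  have hg : ∀ i, g (w i) = fun j => if i = j then 1 else 0 := by
    intro i
    have h1 : π (w i) = b i := by
      have : w i = S.subtype (b i) := congrArg Subtype.val (Basis.span_apply hw i).symm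
      rw [this, ← LinearMap.comp_apply, hπ, LinearMap.id_apply]
    funext j
    simp only [g, LinearMap.comp_apply, h1]
    exact b.equivFun_self i j
  have hφ : φ w = 1 := by
    have h1 : (Matrix.of fun i => g (w i)) = (1 : Matrix (Fin k) (Fin k) F) := by
      ext i j
      rw [Matrix.of_apply, hg i, Matrix.one_apply]
    have h2 : φ w = Matrix.det (Matrix.of fun i => g (w i)) := rfl
    rw [h2, h1, Matrix.det_one]
  intro h0
  let fam : ∀ i, V [⋀^Fin i]→ₗ[F] F := Function.update (fun i => (0 : V [⋀^Fin i]→ₗ[F] F)) k φ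
  have h2 := ExteriorAlgebra.liftAlternating_apply_ιMulti fam w
  rw [h0, map_zero] at h2
  have hfam : fam k = φ := by simp only [fam]; rw [Function.update_self]
  rw [hfam, hφ] at h2
  exact one_ne_zero h2.symm

lemma extend_li {F W : Type*} [Field F] [AddCommGroup W] [Module F W] [FiniteDimensional F W] :
    ∀ (d m : ℕ) (y : Fin m → W), LinearIndependent F y → m + d ≤ finrank F W →
    ∃ z : Fin (m + d) → W, LinearIndependent F z ∧ ∀ i : Fin m, z (Fin.castAdd d i) = y i := by
  intro d
  induction d with
  | zero => exact fun m y hy _ => ⟨y ∘ (Fin.cast (Nat.add_zero m)), hy.comp _ (fun a b h => by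
      simpa [Fin.ext_iff] using h), fun i => by simp [Fin.ext_iff]⟩
  | succ d ih =>
    intro m y hy h
    obtain ⟨z, hz, hzi⟩ := ih m y hy (by omega)
    obtain ⟨x, hx⟩ := exists_linearIndependent_snoc_of_lt_finrank hz (by omega)
    refine ⟨Fin.snoc z x, hx, fun i => ?_⟩
    have h2 : Fin.castAdd (d+1) i = Fin.castSucc (Fin.castAdd d i) := by
      ext; simp
    rw [h2, Fin.snoc_castSucc, hzi]

lemma gen_span {F V : Type*} [Field F] [AddCommGroup V] [Module F V] (k : ℕ) :
    Submodule.span F {x : ⋀[F]^k V |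
      ∃ v : Fin k → V, (x : ExteriorAlgebra F V) = ExteriorAlgebra.ιMulti F k v} = ⊤ := by
  apply Submodule.map_injective_of_injective (⋀[F]^k V).injective_subtype
  rw [Submodule.map_span, Submodule.map_top, Submodule.range_subtype]
  have himg : ((⋀[F]^k V).subtype '' {x : ⋀[F]^k V |
      ∃ v : Fin k → V, (x : ExteriorAlgebra F V) = ExteriorAlgebra.ιMulti F k v})
      = Set.range (ExteriorAlgebra.ιMulti F k (M := V)) := by
    ext y
    constructor
    · rintro ⟨x, ⟨v, hv⟩, rfl⟩
      exact ⟨v, hv.symm⟩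
    · rintro ⟨v, rfl⟩
      exact ⟨⟨ExteriorAlgebra.ιMulti F k v,
        ExteriorAlgebra.ιMulti_range F k (Set.mem_range_self v)⟩, ⟨v, rfl⟩, rfl⟩
  rw [himg, ExteriorAlgebra.ιMulti_span_fixedDegree]

noncomputable def gen' {F V : Type*} [Field F] [AddCommGroup V] [Module F V] (k : ℕ)
    (v : Fin k → V) : ⋀[F]^k V :=
  ⟨ExteriorAlgebra.ιMulti F k v, ExteriorAlgebra.ιMulti_range F k (Set.mem_range_self v)⟩

def updN {F V : Type*} [Field F] [AddCommGroup V] [Module F V] {k : ℕ}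
    (N : Module.End F V) (S : Finset (Fin k)) (v : Fin k → V) : Fin k → V :=
  fun j => if j ∈ S then N (v j) else v j

lemma gen'_eq_zero_of_coord {F V : Type*} [Field F] [AddCommGroup V] [Module F V] {k : ℕ}
    {v : Fin k → V} (j : Fin k) (h : v j = 0) : gen' (F := F) k v = 0 :=
  Subtype.ext ((ExteriorAlgebra.ιMulti F k).map_coord_zero j h)

lemma pow_formula {F V : Type*} [Field F] [AddCommGroup V] [Module F V] {k : ℕ}
    (N : Module.End F V) (hN2 : ∀ x, N (N x) = 0)
    (D : Module.End F (⋀[F]^k V))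
    (hD' : ∀ v : Fin k → V, D (gen' k v) = ∑ j, gen' k (Function.update v j (N (v j))))
    (m : ℕ) (v : Fin k → V) :
    (D ^ m) (gen' k v) = m.factorial •
      ∑ S ∈ Finset.powersetCard m (Finset.univ : Finset (Fin k)), gen' k (updN N S v) := by
  classical
  induction m generalizing v with
  | zero =>
    have hupd : updN N (∅ : Finset (Fin k)) v = v := by
      funext j; simp [updN]
    simp [Finset.powersetCard_zero, hupd]
  | succ m ihm =>
    have hstep : (D ^ (m+1)) (gen' k v) = D ((D ^ m) (gen' k v)) := by
      rw [pow_succ', Module.End.mul_apply]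
    rw [hstep, ihm, map_nsmul, map_sum]
    have hterm : ∀ S ∈ Finset.powersetCard m (Finset.univ : Finset (Fin k)),
        D (gen' k (updN N S v)) = ∑ j ∈ Sᶜ, gen' (F := F) k (updN N (insert j S) v) := by
      intro S _
      rw [hD']
      rw [← Finset.sum_compl_add_sum S
        (f := fun j => gen' (F := F) k (Function.update (updN N S v) j (N (updN N S v j))))]
      have hzero : ∑ j ∈ S, gen' (F := F) k
          (Function.update (updN N S v) j (N (updN N S v j))) = 0 := by
        refine Finset.sum_eq_zero fun j hj => ?_
        refine gen'_eq_zero_of_coord j ?_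
        rw [Function.update_self]
        simp [updN, hj, hN2]
      rw [hzero, add_zero]
      refine Finset.sum_congr rfl fun j hj => ?_
      rw [Finset.mem_compl] at hj
      congr 1
      funext i
      by_cases hi : i = j
      · subst hi
        rw [Function.update_self]
        simp [updN, hj]
      · rw [Function.update_of_ne hi]
        simp [updN, Finset.mem_insert, hi]
    have haux := aux_sum (M := ⋀[F]^k V) m (fun T => gen' (F := F) k (updN N T v))
    rw [Finset.sum_congr rfl hterm, haux, smul_smul, Nat.factorial_succ, mul_comm]

/-- The nilpotency index of an endomorphism: the least `m` with `N ^ (m+1) = 0`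
(junk value if `N` is not nilpotent). -/
noncomputable def nuIdx {R M : Type*} [CommSemiring R] [AddCommMonoid M] [Module R M]
    (N : Module.End R M) : ℕ :=
  sInf {m : ℕ | N ^ (m + 1) = 0}

/-- let `N` be a square-zero endomorphism of rank `s ≥ 1` of a
finite-dimensional vector space `V` over a field of characteristic zero, and let
`1 ≤ k ≤ dim V − s`.  Then the derivation `D` induced by `N` on the `k`-th exterior power
`⋀^k V`, determined by `D (v₁ ∧ ⋯ ∧ v_k) = Σ_j v₁ ∧ ⋯ ∧ N v_j ∧ ⋯ ∧ v_k`, is nilpotent of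
nilpotency index `min k s`. -/
theorem stmt9 {F V : Type*} [Field F] [CharZero F]
    [AddCommGroup V] [Module F V] [FiniteDimensional F V]
    (N : Module.End F V) (hN2 : N ∘ₗ N = 0)
    (s : ℕ) (hs : Module.finrank F (LinearMap.range N) = s) (hs1 : 1 ≤ s)
    (k : ℕ) (hk1 : 1 ≤ k) (hk2 : k ≤ Module.finrank F V - s)
    (D : Module.End F (⋀[F]^k V))
    (hD : ∀ v : Fin k → V,
      (D ⟨ExteriorAlgebra.ιMulti F k v,
          ExteriorAlgebra.ιMulti_range F k (Set.mem_range_self v)⟩ :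
        ExteriorAlgebra F V) =
      ∑ j : Fin k, ExteriorAlgebra.ιMulti F k (Function.update v j (N (v j)))) :
    IsNilpotent D ∧ nuIdx D = min k s := by
  classical
  set μ := min k s with hμ
  have hμs : μ ≤ s := min_le_right k s
  have hμk : μ ≤ k := min_le_left k s
  have hN2' : ∀ x, N (N x) = 0 := fun x => by
    have h := LinearMap.ext_iff.mp hN2 x
    simpa using h
  have hD' : ∀ v : Fin k → V, D (gen' k v) =
      ∑ j, gen' k (Function.update v j (N (v j))) := by
    intro v
    apply Subtype.ext
    have h2 := map_sum ((⋀[F]^k V).subtype)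
      (fun j => gen' (F := F) k (Function.update v j (N (v j)))) Finset.univ
    exact (hD v).trans h2.symm
  -- upper bound : D ^ (μ + 1) = 0
  have hsfin : s ≤ Module.finrank F V := by
    have h := LinearMap.finrank_range_add_finrank_ker N
    omega
  have hD0 : D ^ (μ + 1) = 0 := by
    apply LinearMap.ext_on (gen_span (F := F) (V := V) k)
    rintro x ⟨v, hv⟩
    have hx : x = gen' k v := Subtype.ext hv
    rw [hx, LinearMap.zero_apply, pow_formula N hN2' D hD' (μ+1) v]
    have hall : ∀ S ∈ Finset.powersetCard (μ+1) (Finset.univ : Finset (Fin k)),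
        gen' (F := F) k (updN N S v) = 0 := by
      intro S hS
      have hcard := (Finset.mem_powersetCard.mp hS).2
      by_cases hks : k ≤ s
      · exfalso
        have h1 : S.card ≤ k := by
          have := Finset.card_le_univ S
          simpa using this
        have h2 : μ = k := min_eq_left hks
        omega
      · have hsk : s ≤ k := le_of_not_ge hks
        have h2 : μ = s := min_eq_right hsk
        apply Subtype.ext
        refine (ExteriorAlgebra.ιMulti F k).map_linearDependent _ ?_
        intro hLI
        have h1 := hLI.comp (Subtype.val : {x // x ∈ S} → Fin k) Subtype.val_injective
        have heq : (updN N S v ∘ (Subtype.val : {x // x ∈ S} → Fin k))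
            = fun i : {x // x ∈ S} => N (v i.val) := by
          funext i
          simp only [Function.comp_apply, updN, if_pos i.2]
        rw [heq] at h1
        let g : {x // x ∈ S} → LinearMap.range N :=
          fun i => ⟨N (v i.val), LinearMap.mem_range_self N _⟩
        have h3 : LinearIndependent F g :=
          LinearIndependent.of_comp (LinearMap.range N).subtype h1
        have h4 := h3.fintype_card_le_finrank
        rw [hs, Fintype.card_coe] at h4
        omega
    rw [Finset.sum_eq_zero hall, smul_zero]
  -- lower bound witness
  have hrk : finrank F (LinearMap.ker N) = Module.finrank F V - s := by
    have h := LinearMap.finrank_range_add_finrank_ker N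
    omega
  have hkK : k ≤ finrank F (LinearMap.ker N) := by rw [hrk]; exact hk2
  let f' : Basis (Fin s) F (LinearMap.range N) := finBasisOfFinrankEq F _ hs
  let f : Fin s → V := fun i => (f' i : V)
  have hf_li : LinearIndependent F f := f'.linearIndependent.map' (LinearMap.range N).subtype
      (LinearMap.range N).ker_subtype
  have hfmem : ∀ i, f i ∈ LinearMap.range N := fun i => (f' i).2
  choose e he using fun i => LinearMap.mem_range.mp (hfmem i)
  have hfker : ∀ i, f i ∈ LinearMap.ker N := by
    intro i
    obtain ⟨x, hx⟩ := hfmem i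
    rw [LinearMap.mem_ker, ← hx]
    exact hN2' x
  let y : Fin μ → LinearMap.ker N := fun i => ⟨f (Fin.castLE hμs i), hfker _⟩
  have hy : LinearIndependent F y := by
    apply LinearIndependent.of_comp (LinearMap.ker N).subtype
    have h1 : ((LinearMap.ker N).subtype ∘ y) = f ∘ (Fin.castLE hμs) := rfl
    rw [h1]
    exact hf_li.comp _ (fun a b hab => by simpa [Fin.ext_iff] using hab)
  obtain ⟨z', hz', hz'i⟩ := extend_li (k - μ) μ y hy (by omega)
  have hck : k = μ + (k - μ) := by omega
  let z : Fin k → LinearMap.ker N := fun j => z' (Fin.cast hck j)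
  have hz : LinearIndependent F z := hz'.comp _ (fun a b hab => by
    simpa [Fin.ext_iff] using hab)
  have hzy : ∀ (j : Fin k) (h : (j : ℕ) < μ), z j = y ⟨j, h⟩ := by
    intro j h
    have h1 : Fin.cast hck j = Fin.castAdd (k - μ) (⟨(j : ℕ), h⟩ : Fin μ) := by
      ext; simp
    show z' (Fin.cast hck j) = y ⟨j, h⟩
    rw [h1]
    exact hz'i ⟨(j : ℕ), h⟩
  let v : Fin k → V := fun j =>
    if h : (j : ℕ) < μ then e ⟨(j : ℕ), lt_of_lt_of_le h hμs⟩ else (z j : V)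
  let S₀ : Finset (Fin k) :=
    Finset.map ⟨Fin.castLE hμk, fun a b hab => Fin.ext (by simpa [Fin.ext_iff] using hab)⟩
      Finset.univ
  have hS₀card : S₀.card = μ := by simp [S₀]
  have hS₀mem : ∀ j : Fin k, j ∈ S₀ ↔ (j : ℕ) < μ := by
    intro j
    simp only [S₀, Finset.mem_map, Finset.mem_univ, true_and, Function.Embedding.coeFn_mk]
    constructor
    · rintro ⟨i, rfl⟩
      exact i.2
    · intro h
      exact ⟨⟨(j : ℕ), h⟩, Fin.ext rfl⟩
  have hw : updN N S₀ v = fun j => (z j : V) := by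
    funext j
    by_cases h : (j : ℕ) < μ
    · have hj : j ∈ S₀ := (hS₀mem j).mpr h
      simp only [updN, if_pos hj, v, dif_pos h]
      rw [he, hzy j h]
      exact congrArg f (Fin.ext rfl)
    · have hj : j ∉ S₀ := fun c => h ((hS₀mem j).mp c)
      simp only [updN, if_neg hj, v, dif_neg h]
  have hzV : LinearIndependent F (fun j => ((z j : V))) :=
    hz.map' (LinearMap.ker N).subtype (LinearMap.ker N).ker_subtype
  have hwne : gen' (F := F) k (updN N S₀ v) ≠ 0 := by
    rw [hw]
    intro h
    exact iMulti_ne_zero hzV (congrArg Subtype.val h)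
  have hS₀pc : S₀ ∈ Finset.powersetCard μ (Finset.univ : Finset (Fin k)) :=
    Finset.mem_powersetCard.mpr ⟨Finset.subset_univ _, hS₀card⟩
  have hDμ : (D ^ μ) (gen' k v) = μ.factorial • gen' (F := F) k (updN N S₀ v) := by
    rw [pow_formula N hN2' D hD' μ v]
    congr 1
    refine Finset.sum_eq_single_of_mem S₀ hS₀pc ?_
    intro S hS hne
    have hc : S.card = μ := (Finset.mem_powersetCard.mp hS).2
    have hns : ¬ S ⊆ S₀ := by
      intro hsub
      exact hne (Finset.eq_of_subset_of_card_le hsub (by rw [hS₀card, hc]))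
    obtain ⟨j, hjS, hjS₀⟩ := Finset.not_subset.mp hns
    refine gen'_eq_zero_of_coord j ?_
    have hjμ : ¬ (j : ℕ) < μ := fun c => hjS₀ ((hS₀mem j).mpr c)
    simp only [updN, if_pos hjS, v, dif_neg hjμ]
    exact (z j).2
  have hDμne : D ^ μ ≠ 0 := by
    intro h0
    have h1 : (D ^ μ) (gen' k v) = 0 := by rw [h0]; rfl
    rw [hDμ, ← Nat.cast_smul_eq_nsmul F] at h1
    rcases smul_eq_zero.mp h1 with h | h
    · exact (Nat.cast_ne_zero.mpr (Nat.factorial_ne_zero μ)) h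
    · exact hwne h
  refine ⟨⟨μ + 1, hD0⟩, ?_⟩
  apply le_antisymm
  · exact Nat.sInf_le hD0
  · apply le_csInf ⟨μ, hD0⟩
    intro m hm
    by_contra hlt
    push_neg at hlt
    have h2 : μ = (μ - (m+1)) + (m+1) := by omega
    have hm' : D ^ (m + 1) = 0 := hm
    have h3 : D ^ μ = 0 := by
      have h4 : D ^ μ = D ^ (μ - (m+1)) * D ^ (m+1) := by rw [← pow_add, ← h2]
      rw [h4, hm']
      ext x
      simp [Module.End.mul_apply]
    exact hDμne h3
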